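/- Let H, K be pre-Hilbert spaces over C[[λ]] and A : H → K an adjointable map. Then A maps H₀ into K₀ (zero-length vectors to zero-length vectors), so A descends to a map 𝔠A : H/H₀ → K/K₀, and 𝔠A is adjointable with (𝔠A)* = 𝔠(A*). -/

import Mathlib

/-- An ordered ring in the sense of the paper. -/
structure PosCone (R : Type) [CommRing R] (P : Set R) : Prop where
  trichotomy : ∀ a : R, a ∈ P ∨ a = 0 ∨ -a ∈ P
  zero_not_mem : (0 : R) ∉ P
  not_neg_mem : ∀ a : R, a ∈ P → -a ∉ P
  add_mem : ∀ a b : R, a ∈ P → b ∈ P → a + b ∈ P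
  mul_mem : ∀ a b : R, a ∈ P → b ∈ P → a * b ∈ P

/-- The ring `C = R[i] = R(i)` obtained from `R` by adjoining a square root
of `-1`: elements are formal combinations `a + i b`. -/
@[ext] structure Cx (R : Type) : Type where
  re : R
  im : R

namespace Cx
variable {R : Type} [CommRing R]

instance : Zero (Cx R) := ⟨⟨0, 0⟩⟩
instance : One (Cx R) := ⟨⟨1, 0⟩⟩
instance : Add (Cx R) := ⟨fun z w => ⟨z.re + w.re, z.im + w.im⟩⟩
instance : Neg (Cx R) := ⟨fun z => ⟨-z.re, -z.im⟩⟩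
instance : Mul (Cx R) := ⟨fun z w => ⟨z.re * w.re - z.im * w.im, z.re * w.im + z.im * w.re⟩⟩

@[simp] theorem zero_re : (0 : Cx R).re = 0 := rfl
@[simp] theorem zero_im : (0 : Cx R).im = 0 := rfl
@[simp] theorem one_re : (1 : Cx R).re = 1 := rfl
@[simp] theorem one_im : (1 : Cx R).im = 0 := rfl
@[simp] theorem add_re (z w : Cx R) : (z + w).re = z.re + w.re := rfl
@[simp] theorem add_im (z w : Cx R) : (z + w).im = z.im + w.im := rfl
@[simp] theorem neg_re (z : Cx R) : (-z).re = -z.re := rfl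
@[simp] theorem neg_im (z : Cx R) : (-z).im = -z.im := rfl
@[simp] theorem mul_re (z w : Cx R) : (z * w).re = z.re * w.re - z.im * w.im := rfl
@[simp] theorem mul_im (z w : Cx R) : (z * w).im = z.re * w.im + z.im * w.re := rfl

instance : CommRing (Cx R) where
  add_assoc a b c := by ext <;> simp <;> ring
  zero_add a := by ext <;> simp
  add_zero a := by ext <;> simp
  add_comm a b := by ext <;> simp <;> ring
  left_distrib a b c := by ext <;> simp <;> ring
  right_distrib a b c := by ext <;> simp <;> ring
  zero_mul a := by ext <;> simp
  mul_zero a := by ext <;> simp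
  mul_assoc a b c := by ext <;> simp <;> ring
  one_mul a := by ext <;> simp
  mul_one a := by ext <;> simp
  neg_add_cancel a := by ext <;> simp
  mul_comm a b := by ext <;> simp <;> ring
  nsmul := nsmulRec
  zsmul := zsmulRec

/-- Complex conjugation `a + ib ↦ a - ib` on `C = R[i]`. -/
def conj (z : Cx R) : Cx R := ⟨z.re, -z.im⟩

/-- The imaginary unit `i` of `C = R[i]`. -/
def I : Cx R := ⟨0, 1⟩

end Cx

/-- The positive elements of `C = R[i]`: the elements of `P ⊆ R ⊆ C`. -/
def CxPos {R : Type} [CommRing R] (P : Set R) : Set (Cx R) :=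
  {z | z.im = 0 ∧ z.re ∈ P}

/-- The nonnegative elements of `C = R[i]`: elements of `P ∪ {0} ⊆ R ⊆ C`. -/
def CxNonneg {R : Type} [CommRing R] (P : Set R) : Set (Cx R) :=
  {z | z.im = 0 ∧ (z.re = 0 ∨ z.re ∈ P)}

/-- A pre-Hilbert space over `K` (with conjugation `conj` and positivity set
`Pos`): a `K`-module with a Hermitian, positive-definite inner product which
is `K`-linear in the second argument. -/
structure PreHilbert (K : Type) [CommRing K] (conj : K → K) (Pos : Set K)
    (H : Type) [AddCommGroup H] [Module K H] : Type where
  inner : H → H → K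
  inner_add_right : ∀ φ ψ χ : H, inner φ (ψ + χ) = inner φ ψ + inner φ χ
  inner_smul_right : ∀ (z : K) (φ ψ : H), inner φ (z • ψ) = z * inner φ ψ
  inner_conj : ∀ φ ψ : H, inner φ ψ = conj (inner ψ φ)
  inner_pos : ∀ φ : H, φ ≠ 0 → inner φ φ ∈ Pos

/-- Coefficientwise complex conjugation on `C[[λ]]`. -/
noncomputable def psConj {R : Type} [CommRing R] (f : PowerSeries (Cx R)) :
    PowerSeries (Cx R) :=
  PowerSeries.mk fun n => Cx.conj (PowerSeries.coeff (R := Cx R) n f)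

/-- The positive elements of `C[[λ]] = (R[[λ]])[i]`: the elements of
`R[[λ]]` (all imaginary parts vanish) whose lowest nonvanishing coefficient
is positive. -/
def PSPos {R : Type} [CommRing R] (P : Set R) : Set (PowerSeries (Cx R)) :=
  {f | (∀ m : ℕ, (PowerSeries.coeff (R := Cx R) m f).im = 0) ∧
    ∃ n : ℕ, (∀ m < n, (PowerSeries.coeff (R := Cx R) m f).re = 0) ∧
      (PowerSeries.coeff (R := Cx R) n f).re ∈ P}

section Aux

variable {R : Type} [CommRing R]

/-- Conjugation as a ring hom. -/
def cxConjHom (R : Type) [CommRing R] : Cx R →+* Cx R where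
  toFun := Cx.conj
  map_one' := by ext <;> simp [Cx.conj]
  map_mul' z w := by ext <;> simp [Cx.conj] <;> ring
  map_zero' := by ext <;> simp [Cx.conj]
  map_add' z w := by ext <;> simp [Cx.conj] <;> ring

theorem psConj_eq_map (f : PowerSeries (Cx R)) :
    psConj f = PowerSeries.map (cxConjHom R) f :=
  PowerSeries.ext fun n => by rw [PowerSeries.coeff_map]; simp [psConj]; rfl

@[simp] theorem coeff_psConj (n : ℕ) (f : PowerSeries (Cx R)) :
    PowerSeries.coeff (R := Cx R) n (psConj f) = Cx.conj (PowerSeries.coeff (R := Cx R) n f) := by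
  simp [psConj, PowerSeries.coeff_mk]

theorem psConj_mul (f g : PowerSeries (Cx R)) : psConj (f * g) = psConj f * psConj g := by
  simp [psConj_eq_map, map_mul]

theorem psConj_neg (f : PowerSeries (Cx R)) : psConj (-f) = -psConj f := by
  simp [psConj_eq_map, map_neg]

theorem psConj_zero : psConj (0 : PowerSeries (Cx R)) = 0 := by
  simp [psConj_eq_map, map_zero]

variable {P : Set R} (hP : PosCone R P)

theorem sq_mem_pos (hP : PosCone R P) {x : R} (hx : x ≠ 0) : x * x ∈ P := by
  rcases hP.trichotomy x with h | h | h
  · exact hP.mul_mem _ _ h h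
  · exact absurd h hx
  · have := hP.mul_mem _ _ h h
    simpa using this

theorem norm_mem_pos (hP : PosCone R P) {z : Cx R} (hz : z ≠ 0) :
    z.re * z.re + z.im * z.im ∈ P := by
  by_cases hre : z.re = 0
  · have him : z.im ≠ 0 := by
      intro h; exact hz (by ext <;> simp [hre, h])
    simpa [hre] using sq_mem_pos hP him
  · by_cases him : z.im = 0
    · simpa [him] using sq_mem_pos hP hre
    · exact hP.add_mem _ _ (sq_mem_pos hP hre) (sq_mem_pos hP him)

theorem nonneg_coeff (hP : PosCone R P) {f : PowerSeries (Cx R)}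
    (h : f = 0 ∨ f ∈ PSPos P) (k : ℕ)
    (hlow : ∀ m < k, PowerSeries.coeff (R := Cx R) m f = 0) :
    (PowerSeries.coeff (R := Cx R) k f).re = 0 ∨ (PowerSeries.coeff (R := Cx R) k f).re ∈ P := by
  rcases h with h | ⟨-, n, hn, hnP⟩
  · left; simp [h]
  · rcases lt_trichotomy n k with hnk | rfl | hnk
    · exfalso
      have := hlow n hnk
      rw [this] at hnP
      exact hP.zero_not_mem hnP
    · right; exact hnP
    · left; exact hn k hnk

section Inner

variable {H : Type} [AddCommGroup H] [Module (PowerSeries (Cx R)) H]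
  (hH : PreHilbert (PowerSeries (Cx R)) psConj (PSPos P) H)

theorem myInnerZeroRight (φ : H) : hH.inner φ 0 = 0 := by
  have h := hH.inner_smul_right 0 φ φ
  rw [zero_smul] at h
  simpa using h

theorem myInnerZeroLeft (ψ : H) : hH.inner 0 ψ = 0 := by
  rw [hH.inner_conj, myInnerZeroRight, psConj_zero]

theorem myInnerSmulLeft (z : PowerSeries (Cx R)) (φ ψ : H) :
    hH.inner (z • φ) ψ = psConj z * hH.inner φ ψ := by
  rw [hH.inner_conj, hH.inner_smul_right, psConj_mul, ← hH.inner_conj]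

theorem myInnerAddLeft (φ ψ χ : H) :
    hH.inner (φ + ψ) χ = hH.inner φ χ + hH.inner ψ χ := by
  rw [hH.inner_conj, hH.inner_add_right, psConj_eq_map, map_add,
    ← psConj_eq_map, ← psConj_eq_map, ← hH.inner_conj, ← hH.inner_conj]

/-- Cauchy–Schwarz at order zero: a vector of zero length at `λ = 0` is
orthogonal at `λ = 0` to everything. -/
theorem cs_zero (hP : PosCone R P) (φ ψ : H)
    (h0 : PowerSeries.coeff (R := Cx R) 0 (hH.inner φ φ) = 0) :
    PowerSeries.coeff (R := Cx R) 0 (hH.inner φ ψ) = 0 := by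
  by_contra hb
  set a := hH.inner φ φ with ha
  set b := hH.inner φ ψ with hbdef
  set c := hH.inner ψ ψ with hc
  have hφ : φ ≠ 0 := by
    intro h
    apply hb
    rw [hbdef, h, myInnerZeroLeft hH]
    simp
  have haPos : a ∈ PSPos P := hH.inner_pos φ hφ
  obtain ⟨him, k, hlow, hk⟩ := haPos
  have halow : ∀ m < k, PowerSeries.coeff (R := Cx R) m a = 0 := by
    intro m hm
    ext
    · exact hlow m hm
    · exact him m
  -- the auxiliary vector
  set χ : H := a • ψ + (-b) • φ with hχdef
  set g : PowerSeries (Cx R) := a * c - b * psConj b with hg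
  have hca : psConj a = a := (hH.inner_conj φ φ).symm
  have hbb : hH.inner ψ φ = psConj b := hH.inner_conj ψ φ
  have e1 : hH.inner ψ χ = a * c + (-b) * psConj b := by
    rw [hχdef, hH.inner_add_right, hH.inner_smul_right, hH.inner_smul_right, hbb, ← hc]
  have e2 : hH.inner φ χ = a * b + (-b) * a := by
    rw [hχdef, hH.inner_add_right, hH.inner_smul_right, hH.inner_smul_right, ← hbdef, ← ha]
  have hE : hH.inner χ χ = a * g := by
    rw [hχdef, myInnerAddLeft hH, myInnerSmulLeft hH, myInnerSmulLeft hH, ← hχdef, e1, e2,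
      psConj_neg, hca, hg]
    ring
  have hpos : a * g = 0 ∨ a * g ∈ PSPos P := by
    by_cases hχ0 : χ = 0
    · left; rw [← hE, hχ0, myInnerZeroLeft hH]
    · right; rw [← hE]; exact hH.inner_pos χ hχ0
  -- coefficient computations
  set b0 := PowerSeries.coeff (R := Cx R) 0 b with hb0
  have hg0 : PowerSeries.coeff (R := Cx R) 0 g = -(b0 * Cx.conj b0) := by
    have hac : PowerSeries.coeff (R := Cx R) 0 (a * c)
        = PowerSeries.coeff (R := Cx R) 0 a * PowerSeries.coeff (R := Cx R) 0 c := by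
      simp [PowerSeries.coeff_zero_eq_constantCoeff, map_mul]
    have hbc : PowerSeries.coeff (R := Cx R) 0 (b * psConj b)
        = PowerSeries.coeff (R := Cx R) 0 b * Cx.conj (PowerSeries.coeff (R := Cx R) 0 b) := by
      have h' := coeff_psConj (R := R) 0 b
      rw [PowerSeries.coeff_zero_eq_constantCoeff] at h'
      simp [PowerSeries.coeff_zero_eq_constantCoeff, map_mul, h']
    rw [hg, map_sub, hac, hbc, h0, ← hb0]
    simp
  have hglow : ∀ m < k, PowerSeries.coeff (R := Cx R) m (a * g) = 0 := by
    intro m hm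
    rw [PowerSeries.coeff_mul]
    apply Finset.sum_eq_zero
    intro p hp
    rw [Finset.HasAntidiagonal.mem_antidiagonal] at hp
    have : p.1 < k := lt_of_le_of_lt (by omega) hm
    rw [halow p.1 this, zero_mul]
  have hgk : PowerSeries.coeff (R := Cx R) k (a * g) =
      PowerSeries.coeff (R := Cx R) k a * PowerSeries.coeff (R := Cx R) 0 g := by
    rw [PowerSeries.coeff_mul]
    apply Finset.sum_eq_single_of_mem (k, 0)
    · simp
    · intro p hp hne
      rw [Finset.HasAntidiagonal.mem_antidiagonal] at hp
      have hp1 : p.1 < k := by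
        rcases lt_or_eq_of_le (show p.1 ≤ k by omega) with h | h
        · exact h
        · exact absurd (Prod.ext h (by omega)) hne
      rw [halow p.1 hp1, zero_mul]
  set α := (PowerSeries.coeff (R := Cx R) k a).re with hα
  set β := b0.re * b0.re + b0.im * b0.im with hβ
  have hβP : β ∈ P := norm_mem_pos hP hb
  have hre : (PowerSeries.coeff (R := Cx R) k (a * g)).re = -(α * β) := by
    rw [hgk, hg0]
    have hima : (PowerSeries.coeff (R := Cx R) k a).im = 0 := him k
    simp [Cx.conj, hima, ← hα, hβ]
  have hαβ : α * β ∈ P := hP.mul_mem _ _ hk hβP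
  rcases nonneg_coeff hP hpos k hglow with h | h
  · rw [hre] at h
    have : α * β = 0 := by linear_combination -h
    rw [this] at hαβ
    exact hP.zero_not_mem hαβ
  · rw [hre] at h
    exact hP.not_neg_mem _ hαβ h

end Inner

end Aux

/-- an adjointable map `A : H → K` between pre-Hilbert spaces
over `C[[λ]]` maps zero-length vectors to zero-length vectors, hence descends
to a map `𝔠A : H/H₀ → K/K₀` of the classical limits, and the descended map is
adjointable with `(𝔠A)* = 𝔠(A*)`. -/
theorem classical_limit_adjointable (R : Type) [CommRing R] [Nontrivial R]
    (P : Set R) (hP : PosCone R P)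
    (H K : Type) [AddCommGroup H] [Module (PowerSeries (Cx R)) H]
    [AddCommGroup K] [Module (PowerSeries (Cx R)) K]
    (hH : PreHilbert (PowerSeries (Cx R)) psConj (PSPos P) H)
    (hK : PreHilbert (PowerSeries (Cx R)) psConj (PSPos P) K)
    (A : H →ₗ[PowerSeries (Cx R)] K) (A' : K →ₗ[PowerSeries (Cx R)] H)
    (hA : ∀ (φ : H) (ψ : K), hK.inner (A φ) ψ = hH.inner φ (A' ψ))
    (SH : Submodule (PowerSeries (Cx R)) H)
    (hSH : ∀ φ : H, φ ∈ SH ↔ PowerSeries.coeff (R := Cx R) 0 (hH.inner φ φ) = 0)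
    (SK : Submodule (PowerSeries (Cx R)) K)
    (hSK : ∀ ψ : K, ψ ∈ SK ↔ PowerSeries.coeff (R := Cx R) 0 (hK.inner ψ ψ) = 0) :
    (∀ φ : H, PowerSeries.coeff (R := Cx R) 0 (hH.inner φ φ) = 0 →
        PowerSeries.coeff (R := Cx R) 0 (hK.inner (A φ) (A φ)) = 0) ∧
    (∃ (cA : (H ⧸ SH) →ₗ[PowerSeries (Cx R)] (K ⧸ SK))
        (cA' : (K ⧸ SK) →ₗ[PowerSeries (Cx R)] (H ⧸ SH)),
      (∀ φ : H, cA (Submodule.Quotient.mk φ) = Submodule.Quotient.mk (A φ)) ∧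
      (∀ ψ : K, cA' (Submodule.Quotient.mk ψ) = Submodule.Quotient.mk (A' ψ)) ∧
      (∀ (φ : H) (ψ : K),
        PowerSeries.coeff (R := Cx R) 0 (hK.inner (A φ) ψ)
          = PowerSeries.coeff (R := Cx R) 0 (hH.inner φ (A' ψ)))) := by
  have part1 : ∀ φ : H, PowerSeries.coeff (R := Cx R) 0 (hH.inner φ φ) = 0 →
      PowerSeries.coeff (R := Cx R) 0 (hK.inner (A φ) (A φ)) = 0 := by
    intro φ h0
    rw [hA]
    exact cs_zero hH hP φ _ h0
  refine ⟨part1, ?_⟩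
  have hle1 : SH ≤ SK.comap A := by
    intro φ hφ
    rw [Submodule.mem_comap, hSK]
    rw [hSH] at hφ
    exact part1 φ hφ
  have hle2 : SK ≤ SH.comap A' := by
    intro ψ hψ
    rw [Submodule.mem_comap, hSH]
    rw [hSK] at hψ
    have h1 : hH.inner (A' ψ) (A' ψ) = hK.inner (A (A' ψ)) ψ := (hA _ _).symm
    rw [h1, hK.inner_conj, coeff_psConj, cs_zero hK hP ψ _ hψ]
    ext <;> simp [Cx.conj]
  refine ⟨Submodule.mapQ SH SK A hle1, Submodule.mapQ SK SH A' hle2,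
    fun φ => Submodule.mapQ_apply _ _ _ _, fun ψ => Submodule.mapQ_apply _ _ _ _,
    fun φ ψ => by rw [hA]⟩
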